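/- Let P be a finite connected poset with unfolding A_0, B_1, …, A_{m−1}, B_m from x_0, and suppose an element y lies in Up(A_{i−1}) ∩ Up(A_i) ∩ D(B_i) for some i. Then the set of elements of the zig-zag path Z(y) (the path from y to x_0 in the parent tree T) that lie in Up(A_i) forms a chain in P contained in Up(A_{i−1}), with y as its maximum element. -/
import Mathlib


section Defs
variable (α : Type*) [PartialOrder α]

/-- `L` is a linear extension of the partial order on `α`. -/
def IsLinExt (L : LinearOrder α) : Prop := ∀ x y : α, x ≤ y → L.le x y

/-- The poset `α` is the intersection of `d` linear extensions. -/
def HasRealizer (d : ℕ) : Prop :=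
  ∃ Ls : Fin d → LinearOrder α, (∀ i, IsLinExt α (Ls i)) ∧
    ∀ x y : α, (∀ i, (Ls i).le x y) → x ≤ y

/-- The order dimension of the poset `α`. -/
noncomputable def pdim : ℕ := sInf {d | HasRealizer α d}

/-- `x` and `y` are incomparable. -/
def IncompP (x y : α) : Prop := ¬ x ≤ y ∧ ¬ y ≤ x

/-- A set of (incomparable) pairs is reversible if some linear extension reverses all pairs. -/
def ReversibleSet (I : Set (α × α)) : Prop :=
  ∃ L : LinearOrder α, IsLinExt α L ∧ ∀ p ∈ I, L.lt p.2 p.1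

/-- `I` can be partitioned into `d` reversible sets. -/
def RevPart (I : Set (α × α)) (d : ℕ) : Prop :=
  ∃ J : Fin d → Set (α × α), (⋃ i, J i) = I ∧
    (∀ i j, i ≠ j → Disjoint (J i) (J j)) ∧ ∀ i, ReversibleSet α (J i)

/-- The least number of reversible sets partitioning `I` (with `revDim ∅ = 1`). -/
noncomputable def revDim (I : Set (α × α)) : ℕ := sInf {d | 0 < d ∧ RevPart α I d}

/-- Incomparable pairs `(a,b)` with `a ∈ A` and `b ∈ B`. -/
def IncPairs (A B : Set α) : Set (α × α) := {p | p.1 ∈ A ∧ p.2 ∈ B ∧ IncompP α p.1 p.2}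

noncomputable def dimAB (A B : Set α) : ℕ := revDim α (IncPairs α A B)

/-- The minimal elements of `α`. -/
def minimalSet : Set α := {x | ∀ y : α, y ≤ x → y = x}

/-- The maximal elements of `α`. -/
def maximalSet : Set α := {x | ∀ y : α, x ≤ y → y = x}

end Defs

section Unfold
variable (α : Type*) [PartialOrder α]

/-- The upset of a set. -/
def UpS (S : Set α) : Set α := {x | ∃ s ∈ S, s ≤ x}

/-- The downset of a set. -/
def DnS (S : Set α) : Set α := {x | ∃ s ∈ S, x ≤ s}

/-- The poset `α` is connected (w.r.t. its comparability/cover graph). -/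
def PosetConnected : Prop :=
  ∀ x y : α, Relation.ReflTransGen (fun u v : α => u ≤ v ∨ v ≤ u) x y

/-- Auxiliary recursion for the unfolding of `α` from starting sets `A0, B1`:
`unfoldAux A0 B1 i = ((A_i, B_{i+1}), (A_0 ∪ ⋯ ∪ A_i, B_1 ∪ ⋯ ∪ B_{i+1}))`. -/
def unfoldAux (A0 B1 : Set α) : ℕ → (Set α × Set α) × (Set α × Set α)
  | 0 => ((A0, B1), (A0, B1))
  | i + 1 =>
    let p := unfoldAux A0 B1 i
    let Ai : Set α := {a | a ∈ minimalSet α ∧ a ∉ p.2.1 ∧ ∃ b ∈ p.1.2, a ≤ b}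
    let Bi : Set α := {b | b ∈ maximalSet α ∧ b ∉ p.2.2 ∧ ∃ a ∈ Ai, a ≤ b}
    ((Ai, Bi), (p.2.1 ∪ Ai, p.2.2 ∪ Bi))

/-- The set `A_i` of the unfolding. -/
def uA (A0 B1 : Set α) (i : ℕ) : Set α := (unfoldAux α A0 B1 i).1.1

/-- The set `B_j` (for `j ≥ 1`) of the unfolding; `uB 0 = ∅` by convention. -/
def uB (A0 B1 : Set α) : ℕ → Set α
  | 0 => ∅
  | i + 1 => (unfoldAux α A0 B1 i).1.2

/-- The starting data of the unfolding of `α` from `x0 ∈ Min(α) ∪ Max(α)`. -/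
def UnfoldStart (x0 : α) (A0 B1 : Set α) : Prop :=
  (x0 ∈ minimalSet α ∧ A0 = {x0} ∧ B1 = {b | b ∈ maximalSet α ∧ x0 ≤ b}) ∨
  (x0 ∈ maximalSet α ∧ A0 = (∅ : Set α) ∧ B1 = {x0})

/-- `α(x)`: the least `i` with `x ∈ Up(A_i)`. -/
noncomputable def alphaF (A0 B1 : Set α) (x : α) : ℕ :=
  sInf {i | x ∈ UpS α (uA α A0 B1 i)}

/-- `β(x)`: the least `j ≥ 1` with `x ∈ D(B_j)`. -/
noncomputable def betaF (A0 B1 : Set α) (x : α) : ℕ :=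
  sInf {j | 1 ≤ j ∧ x ∈ DnS α (uB α A0 B1 j)}

/-- `y` is a valid parent of `x` in the unfolding. -/
def IsParentOf (A0 B1 : Set α) (x y : α) : Prop :=
  (betaF α A0 B1 x = alphaF α A0 B1 x ∧ x ⋖ y ∧
      ∃ b ∈ uB α A0 B1 (betaF α A0 B1 x), y ≤ b) ∨
  (betaF α A0 B1 x = alphaF α A0 B1 x + 1 ∧ y ⋖ x ∧
      ∃ a ∈ uA α A0 B1 (alphaF α A0 B1 x), a ≤ y)

end Unfold

section AuxLemmas
variable {α : Type*} [PartialOrder α]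

lemma unfold_cum_mem (A0 B1 : Set α) (t : ℕ) (x : α) :
    x ∈ (unfoldAux α A0 B1 t).2.1 ↔ ∃ j ≤ t, x ∈ uA α A0 B1 j := by
  induction t with
  | zero =>
    constructor
    · intro hx; exact ⟨0, le_rfl, hx⟩
    · rintro ⟨j, hj, hx⟩
      obtain rfl : j = 0 := Nat.le_zero.mp hj
      exact hx
  | succ t ih =>
    have hset : (unfoldAux α A0 B1 (t+1)).2.1
        = (unfoldAux α A0 B1 t).2.1 ∪ uA α A0 B1 (t+1) := rfl
    rw [hset]
    constructor
    · rintro (hx | hx)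
      · obtain ⟨j, hj, hxx⟩ := ih.mp hx
        exact ⟨j, hj.trans (Nat.le_succ t), hxx⟩
      · exact ⟨t+1, le_rfl, hx⟩
    · rintro ⟨j, hj, hx⟩
      rcases Nat.eq_or_lt_of_le hj with rfl | h
      · exact Or.inr hx
      · exact Or.inl (ih.mpr ⟨j, by omega, hx⟩)

lemma uA_succ_mem (A0 B1 : Set α) (t : ℕ) (x : α) :
    x ∈ uA α A0 B1 (t+1) ↔ x ∈ minimalSet α ∧ x ∉ (unfoldAux α A0 B1 t).2.1 ∧
      ∃ b ∈ uB α A0 B1 (t+1), x ≤ b := Iff.rfl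

lemma uA_disj (A0 B1 : Set α) {j k : ℕ} (h : j < k) {x : α}
    (hj : x ∈ uA α A0 B1 j) (hk : x ∈ uA α A0 B1 k) : False := by
  obtain ⟨t, rfl⟩ : ∃ t, k = t + 1 := ⟨k - 1, by omega⟩
  exact ((uA_succ_mem A0 B1 t x).mp hk).2.1
    ((unfold_cum_mem A0 B1 t x).mpr ⟨j, by omega, hj⟩)

lemma mem_F5 (A0 B1 : Set α) {t : ℕ} {a b : α} (ha : a ∈ minimalSet α)
    (hab : a ≤ b) (hb : b ∈ uB α A0 B1 (t+1)) : ∃ j ≤ t + 1, a ∈ uA α A0 B1 j := by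
  by_cases h : a ∈ (unfoldAux α A0 B1 t).2.1
  · obtain ⟨j, hj, hx⟩ := (unfold_cum_mem A0 B1 t a).mp h
    exact ⟨j, hj.trans (Nat.le_succ t), hx⟩
  · exact ⟨t+1, le_rfl, (uA_succ_mem A0 B1 t a).mpr ⟨ha, h, b, hb, hab⟩⟩

/-- If `z ∈ Up(A_k)` and `z ∈ D(B_j)` with `1 ≤ j < k`, contradiction. -/
lemma upDn_contra (A0 B1 : Set α) {j k : ℕ} (hj : 1 ≤ j) (hjk : j < k) {z : α}
    (hup : z ∈ UpS α (uA α A0 B1 k)) (hdn : z ∈ DnS α (uB α A0 B1 j)) : False := by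
  obtain ⟨a, ha, haz⟩ := hup
  obtain ⟨b, hb, hzb⟩ := hdn
  obtain ⟨t, rfl⟩ : ∃ t, j = t + 1 := ⟨j - 1, by omega⟩
  have hamin : a ∈ minimalSet α := by
    obtain ⟨s, rfl⟩ : ∃ s, k = s + 1 := ⟨k - 1, by omega⟩
    exact ((uA_succ_mem A0 B1 s a).mp ha).1
  obtain ⟨j', hj', ha'⟩ := mem_F5 A0 B1 hamin (haz.trans hzb) hb
  exact uA_disj A0 B1 (by omega : j' < k) ha' ha

lemma alphaF_le (A0 B1 : Set α) {x : α} {i : ℕ} (h : x ∈ UpS α (uA α A0 B1 i)) :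
    alphaF α A0 B1 x ≤ i := Nat.sInf_le h

lemma alphaF_mem (A0 B1 : Set α) {x : α} {i : ℕ} (h : x ∈ UpS α (uA α A0 B1 i)) :
    x ∈ UpS α (uA α A0 B1 (alphaF α A0 B1 x)) :=
  Nat.sInf_mem (⟨i, h⟩ : {i | x ∈ UpS α (uA α A0 B1 i)}.Nonempty)

lemma betaF_le (A0 B1 : Set α) {x : α} {j : ℕ} (h1 : 1 ≤ j)
    (h2 : x ∈ DnS α (uB α A0 B1 j)) : betaF α A0 B1 x ≤ j :=
  Nat.sInf_le ⟨h1, h2⟩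

lemma betaF_mem (A0 B1 : Set α) {x : α} {j : ℕ} (h1 : 1 ≤ j)
    (h2 : x ∈ DnS α (uB α A0 B1 j)) :
    1 ≤ betaF α A0 B1 x ∧ x ∈ DnS α (uB α A0 B1 (betaF α A0 B1 x)) :=
  Nat.sInf_mem (⟨j, h1, h2⟩ : {j | 1 ≤ j ∧ x ∈ DnS α (uB α A0 B1 j)}.Nonempty)

end AuxLemmas

/-- if `y ∈ Up(A_{i-1}) ∩ Up(A_i) ∩ D(B_i)` then the elements of the
zig-zag path of `y` (the iterated parents of `y`, i.e. the path from `y` to `x0` in the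
parent tree) that lie in `Up(A_i)` form a chain contained in `Up(A_{i-1})` whose
maximum element is `y`. -/
theorem stmt19 {α : Type*} [Fintype α] [PartialOrder α] [Nontrivial α]
    (hconn : PosetConnected α)
    (x0 : α) (A0 B1 : Set α) (hstart : UnfoldStart α x0 A0 B1)
    (par : α → α) (hpar : ∀ x : α, x ≠ x0 → IsParentOf α A0 B1 x (par x))
    (hpar0 : par x0 = x0)
    (i : ℕ) (hi : 1 ≤ i) (y : α)
    (hy1 : y ∈ UpS α (uA α A0 B1 (i - 1)))
    (hy2 : y ∈ UpS α (uA α A0 B1 i))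
    (hy3 : y ∈ DnS α (uB α A0 B1 i)) :
    IsChain (· ≤ ·) ({z | (∃ n : ℕ, par^[n] y = z) ∧ z ∈ UpS α (uA α A0 B1 i)} : Set α) ∧
    ({z | (∃ n : ℕ, par^[n] y = z) ∧ z ∈ UpS α (uA α A0 B1 i)} : Set α)
      ⊆ UpS α (uA α A0 B1 (i - 1)) ∧
    y ∈ ({z | (∃ n : ℕ, par^[n] y = z) ∧ z ∈ UpS α (uA α A0 B1 i)} : Set α) ∧
    ∀ z ∈ ({z | (∃ n : ℕ, par^[n] y = z) ∧ z ∈ UpS α (uA α A0 B1 i)} : Set α), z ≤ y := by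
  classical
  obtain ⟨j0, rfl⟩ : ∃ j, i = j + 1 := ⟨i - 1, by omega⟩
  simp only [Nat.add_sub_cancel] at hy1 ⊢
  have hparfix : ∀ n, par^[n] x0 = x0 := fun n => Function.iterate_fixed hpar0 n
  -- x0 is not in Up(A_{j0+1})
  have hx0 : x0 ∉ UpS α (uA α A0 B1 (j0+1)) := by
    rintro ⟨a, ha, hax⟩
    rcases hstart with ⟨hmin, hA0, hB1⟩ | ⟨hmax, hA0, hB1⟩
    · have hax0 : a = x0 := hmin a hax
      subst hax0
      have h0 : a ∈ uA α A0 B1 0 := by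
        show a ∈ A0; rw [hA0]; rfl
      exact uA_disj A0 B1 (Nat.succ_pos j0) h0 ha
    · rcases Nat.eq_zero_or_pos j0 with rfl | hj0
      · obtain ⟨a', ha', _⟩ := hy1
        have : a' ∈ (∅ : Set α) := by rw [← hA0]; exact ha'
        exact this.elim
      · have hdn : x0 ∈ DnS α (uB α A0 B1 1) :=
          ⟨x0, by rw [show uB α A0 B1 1 = B1 from rfl, hB1]; rfl, le_rfl⟩
        exact upDn_contra A0 B1 le_rfl (by omega) ⟨a, ha, hax⟩ hdn
  -- the key lemma
  have key : ∀ m, par^[m] y ∈ UpS α (uA α A0 B1 (j0+1)) →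
      par^[m] y ∈ UpS α (uA α A0 B1 j0) ∧ ∀ k ≤ m, par^[m] y ≤ par^[k] y := by
    intro m hm
    have hne : ∀ k ≤ m, par^[k] y ≠ x0 := by
      intro k hk hkx
      apply hx0
      have hmx : par^[m] y = x0 := by
        have h1 : par^[m] y = par^[m-k] (par^[k] y) := by
          rw [← Function.iterate_add_apply]; congr 1; omega
        rw [h1, hkx, hparfix]
      rwa [hmx] at hm
    -- forward invariant
    have F : ∀ k, k ≤ m →
        alphaF α A0 B1 (par^[k] y) ≤ j0 ∧
        par^[k] y ∈ UpS α (uA α A0 B1 (alphaF α A0 B1 (par^[k] y))) ∧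
        1 ≤ betaF α A0 B1 (par^[k] y) ∧
        betaF α A0 B1 (par^[k] y) ≤ j0 + 1 ∧
        par^[k] y ∈ DnS α (uB α A0 B1 (betaF α A0 B1 (par^[k] y))) := by
      intro k
      induction k with
      | zero =>
        intro _
        simp only [Function.iterate_zero, id_eq]
        have hβ := betaF_mem A0 B1 (by omega : 1 ≤ j0+1) hy3
        exact ⟨alphaF_le A0 B1 hy1, alphaF_mem A0 B1 hy1, hβ.1,
          betaF_le A0 B1 (by omega) hy3, hβ.2⟩
      | succ k ih =>
        intro hk1
        have hk : k ≤ m := by omega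
        obtain ⟨hα1, hα2, hβ1, hβ2, hβ3⟩ := ih hk
        have hsucc : par^[k+1] y = par (par^[k] y) := Function.iterate_succ_apply' par k y
        rw [hsucc]
        rcases hpar _ (hne k hk) with ⟨heq, hcov, b, hb, hpb⟩ | ⟨heq, hcov, a, ha, hap⟩
        · -- down step
          have hup : par (par^[k] y) ∈ UpS α (uA α A0 B1 (alphaF α A0 B1 (par^[k] y))) := by
            obtain ⟨a, ha, hax⟩ := hα2
            exact ⟨a, ha, hax.trans hcov.le⟩
          have hdn : par (par^[k] y) ∈ DnS α (uB α A0 B1 (betaF α A0 B1 (par^[k] y))) :=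
            ⟨b, hb, hpb⟩
          have hβ := betaF_mem A0 B1 hβ1 hdn
          exact ⟨(alphaF_le A0 B1 hup).trans hα1, alphaF_mem A0 B1 hup, hβ.1,
            (betaF_le A0 B1 hβ1 hdn).trans hβ2, hβ.2⟩
        · -- up step
          have hup : par (par^[k] y) ∈ UpS α (uA α A0 B1 (alphaF α A0 B1 (par^[k] y))) :=
            ⟨a, ha, hap⟩
          have hdn : par (par^[k] y) ∈ DnS α (uB α A0 B1 (betaF α A0 B1 (par^[k] y))) := by
            obtain ⟨b, hb, hxb⟩ := hβ3
            exact ⟨b, hb, hcov.le.trans hxb⟩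
          have hβ := betaF_mem A0 B1 hβ1 hdn
          exact ⟨(alphaF_le A0 B1 hup).trans hα1, alphaF_mem A0 B1 hup, hβ.1,
            (betaF_le A0 B1 hβ1 hdn).trans hβ2, hβ.2⟩
    -- beta is exactly j0+1 at points of Up(A_{j0+1})
    have hβeq : ∀ k, k ≤ m → par^[k] y ∈ UpS α (uA α A0 B1 (j0+1)) →
        betaF α A0 B1 (par^[k] y) = j0 + 1 := by
      intro k hk hkup
      obtain ⟨_, _, hβ1, hβ2, hβ3⟩ := F k hk
      by_contra hneq
      exact upDn_contra A0 B1 hβ1 (by omega) hkup hβ3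
    -- downward induction: the whole prefix dominates z_m
    have down : ∀ d k, k + d = m →
        par^[m] y ≤ par^[k] y ∧ betaF α A0 B1 (par^[k] y) = j0 + 1 := by
      intro d
      induction d with
      | zero =>
        intro k hk
        obtain rfl : k = m := by omega
        exact ⟨le_rfl, hβeq k le_rfl hm⟩
      | succ d ih =>
        intro k hk
        have h1 := ih (k+1) (by omega)
        have hk_le : k ≤ m := by omega
        obtain ⟨hα1, hα2, hβ1, hβ2, hβ3⟩ := F k hk_le
        have hsucc : par^[k+1] y = par (par^[k] y) := Function.iterate_succ_apply' par k y
        rcases hpar _ (hne k hk_le) with ⟨heq, hcov, b, hb, hpb⟩ | ⟨heq, hcov, a, ha, hap⟩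
        · -- down step is impossible here
          exfalso
          have hle : betaF α A0 B1 (par^[k+1] y) ≤ betaF α A0 B1 (par^[k] y) := by
            rw [hsucc]
            exact betaF_le A0 B1 hβ1 ⟨b, hb, hpb⟩
          have h12 := h1.2
          omega
        · -- up step
          have hle : betaF α A0 B1 (par^[k+1] y) ≤ betaF α A0 B1 (par^[k] y) := by
            rw [hsucc]
            obtain ⟨b, hb, hxb⟩ := hβ3
            exact betaF_le A0 B1 hβ1 ⟨b, hb, hcov.le.trans hxb⟩
          have h12 := h1.2
          refine ⟨h1.1.trans ?_, by omega⟩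
          rw [hsucc]
          exact hcov.le
    have hβm : betaF α A0 B1 (par^[m] y) = j0 + 1 := hβeq m le_rfl hm
    obtain ⟨hα1, hα2, _, _, _⟩ := F m le_rfl
    rcases hpar _ (hne m le_rfl) with ⟨heq, _, _⟩ | ⟨heq, _, _⟩
    · omega
    · have hαm : alphaF α A0 B1 (par^[m] y) = j0 := by omega
      rw [hαm] at hα2
      exact ⟨hα2, fun k hk => (down (m - k) k (by omega)).1⟩
  refine ⟨?_, ?_, ⟨⟨0, rfl⟩, hy2⟩, ?_⟩
  · rintro z ⟨⟨n, rfl⟩, hz⟩ w ⟨⟨n', rfl⟩, hw⟩ hzw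
    rcases le_total n n' with h | h
    · exact Or.inr ((key n' hw).2 n h)
    · exact Or.inl ((key n hz).2 n' h)
  · rintro z ⟨⟨n, rfl⟩, hz⟩
    exact (key n hz).1
  · rintro z ⟨⟨n, rfl⟩, hz⟩
    exact (key n hz).2 0 (Nat.zero_le n)
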